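/- Let n, n', m, x be natural numbers with x ≤ m ≤ n ≤ n'. Then C(n, x)·C(n', m−x) ≥ C(n, m). Consequently, among all hypergeometric probabilities q(X) = C(n,X)·C(n',m−X)/C(n+n',m) with 0 ≤ X ≤ m, the smallest is q(m) = C(n,m)/C(n+n',m), attained at the most biased contingency table X = m. -/

import Mathlib

/-- The hypergeometric probability q(X) = C(n,X)·C(n',m−X) / C(n+n',m). -/
def hypergeomProb (n n' m X : ℕ) : ℚ :=
  (n.choose X * n'.choose (m - X) : ℚ) / ((n + n').choose m)

theorem hypergeom_min_at_most_biased
    (n n' m x : ℕ) (hxm : x ≤ m) (hmn : m ≤ n) (hnn' : n ≤ n') :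
    n.choose m ≤ n.choose x * n'.choose (m - x) ∧
    (∀ X : ℕ, X ≤ m →
      hypergeomProb n n' m m ≤ hypergeomProb n n' m X) ∧
    hypergeomProb n n' m m = (n.choose m : ℚ) / ((n + n').choose m) := by
  have key : ∀ y : ℕ, y ≤ m → n.choose m ≤ n.choose y * n'.choose (m - y) := by
    intro y hy
    calc n.choose m ≤ n.choose m * m.choose y := by
          have : 1 ≤ m.choose y := Nat.choose_pos hy
          nlinarith
      _ = n.choose y * (n - y).choose (m - y) := Nat.choose_mul hy
      _ ≤ n.choose y * n'.choose (m - y) := by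
          exact Nat.mul_le_mul_left _
            (Nat.choose_le_choose _ ((Nat.sub_le n y).trans hnn'))
  have heq : hypergeomProb n n' m m = (n.choose m : ℚ) / ((n + n').choose m) := by
    simp [hypergeomProb]
  refine ⟨key x hxm, fun X hX => ?_, heq⟩
  rw [heq]
  unfold hypergeomProb
  have hd : (0:ℚ) < ((n + n').choose m : ℚ) := by
    exact_mod_cast Nat.choose_pos (hmn.trans (Nat.le_add_right n n'))
  gcongr
  exact_mod_cast key X hX
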